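/- The poset P of conditions satisfies the countable chain condition: for every uncountable set S⊆P there exist distinct p,q∈S and r∈P with r≤p and r≤q; equivalently, every antichain of P is countable. -/

import Mathlib

noncomputable section

/-- The countable ordinals: the ordinals below `ω₁`. -/
abbrev CtblOrd : Type _ := {o : Ordinal // o < (Cardinal.aleph 1).ord}

/-- A condition `p = ⟨A_p, n_p, U_p⟩`: `A_p` is a finite set of countable ordinals,
`n_p ∈ ω`, and `U_p` is a function from `A_p × n_p` to `𝒫(A_p)` (encoded as a total
function that takes the default value `∅` outside its domain) satisfying (P2) and (P3). -/
structure Cond where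
  /-- the finite set `A_p ⊆ ω₁` -/
  A : Finset CtblOrd
  /-- the natural number `n_p` -/
  n : ℕ
  /-- the function `U_p : A_p × n_p → 𝒫(A_p)` -/
  U : CtblOrd → ℕ → Finset CtblOrd
  default_empty : ∀ α i, ¬(α ∈ A ∧ i < n) → U α i = ∅
  mem_powerset : ∀ α ∈ A, ∀ i < n, U α i ⊆ A
  P2_self : ∀ α ∈ A, ∀ i < n, α ∈ U α i
  P2_mono : ∀ α ∈ A, ∀ i, 1 ≤ i → i < n → U α i ⊆ U α (i - 1)
  P3 : ∀ α ∈ A, ∀ β ∈ A, ∀ i < n, β ∈ U α i → U α i ⊆ U β 0 → β ≤ α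

/-- `Cond.le q p` means `q ≤ p`: clauses (a), (b), (c), (d1), (d2). -/
def Cond.le (q p : Cond) : Prop :=
  p.A ⊆ q.A ∧ p.n ≤ q.n ∧
  (∀ α ∈ p.A, ∀ i < p.n, p.U α i = q.U α i ∩ p.A) ∧
  (∀ α ∈ p.A, ∀ i < p.n, ∀ β ∈ p.A, ∀ j < p.n,
    p.U α i ∩ p.U β j = ∅ → q.U α i ∩ q.U β j = ∅) ∧
  (∀ α ∈ p.A, ∀ i < p.n, ∀ β ∈ p.A, ∀ j < p.n,
    p.U α i ⊆ p.U β j → q.U α i ⊆ q.U β j)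

/-- `p0` and `p1` are twins with twin function `σ`: `n₀ = n₁`, `|A₀| = |A₁|`, `σ` is the
(unique) order preserving bijection from `A₀` onto `A₁`, (I1) `σ` is the identity on
`A₀ ∩ A₁`, and (I2) `U₁(σ(α), i) = σ''U₀(α, i)` for all `α ∈ A₀`, `i < n₀`. -/
def Twins (p0 p1 : Cond) (σ : CtblOrd → CtblOrd) : Prop :=
  p0.n = p1.n ∧ p0.A.card = p1.A.card ∧
  p0.A.image σ = p1.A ∧
  (∀ α ∈ p0.A, ∀ β ∈ p0.A, α < β → σ α < σ β) ∧
  (∀ δ ∈ p0.A ∩ p1.A, σ δ = δ) ∧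
  (∀ α ∈ p0.A, ∀ i < p0.n, p1.U (σ α) i = (p0.U α i).image σ)

/-- The triple `⟨A, n, U⟩` extends the condition `p` in the ordering of `P`:
clauses (a), (b), (c), (d1), (d2). -/
def ExtendsTriple (A : Finset CtblOrd) (n : ℕ) (U : CtblOrd → ℕ → Finset CtblOrd)
    (p : Cond) : Prop :=
  p.A ⊆ A ∧ p.n ≤ n ∧
  (∀ α ∈ p.A, ∀ i < p.n, p.U α i = U α i ∩ p.A) ∧
  (∀ α ∈ p.A, ∀ i < p.n, ∀ β ∈ p.A, ∀ j < p.n,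
    p.U α i ∩ p.U β j = ∅ → U α i ∩ U β j = ∅) ∧
  (∀ α ∈ p.A, ∀ i < p.n, ∀ β ∈ p.A, ∀ j < p.n,
    p.U α i ⊆ p.U β j → U α i ⊆ U β j)


lemma omega1_isLimit : Order.IsSuccLimit ((Cardinal.aleph 1).ord) :=
  Cardinal.isSuccLimit_ord (Cardinal.aleph0_le_aleph 1)
def d0 : CtblOrd := ⟨0, omega1_isLimit.pos⟩
def enum (A : Finset CtblOrd) (k : ℕ) : CtblOrd := (A.sort (· ≤ ·)).getD k d0
def rankIn (A : Finset CtblOrd) (x : CtblOrd) : ℕ := (A.filter (· < x)).card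

lemma enum_mem {A : Finset CtblOrd} {k : ℕ} (h : k < A.card) : enum A k ∈ A := by
  rw [← Finset.mem_sort (· ≤ ·), enum, List.getD_eq_getElem _ d0 (by rwa [Finset.length_sort])]
  exact List.getElem_mem _

lemma enum_lt {A : Finset CtblOrd} {k l : ℕ} (hkl : k < l) (h : l < A.card) :
    enum A k < enum A l := by
  have hk : k < (A.sort (· ≤ ·)).length := by rw [Finset.length_sort]; omega
  have hl : l < (A.sort (· ≤ ·)).length := by rwa [Finset.length_sort]
  rw [enum, enum, List.getD_eq_getElem _ d0 hk, List.getD_eq_getElem _ d0 hl]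
  exact List.pairwise_iff_getElem.mp (A.sortedLT_sort.pairwise) k l hk hl hkl

lemma enum_surj {A : Finset CtblOrd} {x : CtblOrd} (h : x ∈ A) :
    ∃ k < A.card, enum A k = x := by
  rw [← Finset.mem_sort (· ≤ ·)] at h
  obtain ⟨k, hk, hx⟩ := List.mem_iff_getElem.mp h
  refine ⟨k, by rwa [Finset.length_sort] at hk, ?_⟩
  rw [enum, List.getD_eq_getElem _ d0 hk, hx]

lemma rank_enum {A : Finset CtblOrd} {k : ℕ} (h : k < A.card) :
    rankIn A (enum A k) = k := by
  classical
  have himg : A.filter (· < enum A k) = (Finset.range k).image (enum A) := by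
    ext x
    simp only [Finset.mem_filter, Finset.mem_image, Finset.mem_range]
    constructor
    · rintro ⟨hxA, hxlt⟩
      obtain ⟨l, hl, rfl⟩ := enum_surj hxA
      refine ⟨l, ?_, rfl⟩
      by_contra hc
      push_neg at hc
      rcases Nat.lt_or_ge k l with h2 | h2
      · exact absurd (enum_lt h2 hl) (not_lt.mpr (le_of_lt hxlt))
      · have : k = l := le_antisymm hc h2
        rw [this] at hxlt
        exact lt_irrefl _ hxlt
    · rintro ⟨l, hl, rfl⟩
      exact ⟨enum_mem (lt_trans hl h), enum_lt hl h⟩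
  rw [rankIn, himg, Finset.card_image_of_injOn, Finset.card_range]
  intro a ha b hb hab
  simp only [Finset.coe_range, Set.mem_Iio] at ha hb
  by_contra hne
  rcases Nat.lt_or_ge a b with h2 | h2
  · exact absurd (hab ▸ enum_lt h2 (lt_trans hb h)) (lt_irrefl _)
  · have h3 : b < a := lt_of_le_of_ne h2 (Ne.symm hne)
    exact absurd (hab ▸ enum_lt h3 (lt_trans ha h)) (lt_irrefl _)

lemma rank_lt {A : Finset CtblOrd} {x : CtblOrd} (h : x ∈ A) : rankIn A x < A.card := by
  obtain ⟨k, hk, rfl⟩ := enum_surj h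
  rwa [rank_enum hk]

lemma enum_rank {A : Finset CtblOrd} {x : CtblOrd} (h : x ∈ A) : enum A (rankIn A x) = x := by
  obtain ⟨k, hk, rfl⟩ := enum_surj h
  rw [rank_enum hk]

open Classical in
def condType (p : Cond) : ℕ × ℕ × Finset (ℕ × ℕ × ℕ) :=
  (p.A.card, p.n,
    (Finset.range p.A.card ×ˢ Finset.range p.n ×ˢ Finset.range p.A.card).filter
      (fun w => enum p.A w.2.2 ∈ p.U (enum p.A w.1) w.2.1))

lemma condType_spec {p q : Cond} (h : condType p = condType q) :
    p.A.card = q.A.card ∧ p.n = q.n ∧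
      ∀ k i l, k < p.A.card → i < p.n → l < p.A.card →
        (enum p.A l ∈ p.U (enum p.A k) i ↔ enum q.A l ∈ q.U (enum q.A k) i) := by
  classical
  have h1 : p.A.card = q.A.card := congrArg Prod.fst h
  have h2 : p.n = q.n := congrArg (fun x => x.2.1) h
  refine ⟨h1, h2, ?_⟩
  intro k i l hk hi hl
  have h3 := congrArg (fun x => x.2.2) h
  simp only [condType] at h3
  have h4 := Finset.ext_iff.mp h3 (k, i, l)
  simp only [Finset.mem_filter, Finset.mem_product, Finset.mem_range] at h4
  constructor
  · intro hm
    exact (h4.mp ⟨⟨hk, hi, hl⟩, hm⟩).2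
  · intro hm
    exact (h4.mpr ⟨⟨h1 ▸ hk, h2 ▸ hi, h1 ▸ hl⟩, hm⟩).2

lemma condType_inj {p q : Cond} (hA : p.A = q.A) (h : condType p = condType q) : p = q := by
  obtain ⟨h1, h2, h3⟩ := condType_spec h
  have hU : p.U = q.U := by
    funext α i
    by_cases hc : α ∈ p.A ∧ i < p.n
    · obtain ⟨hα, hi⟩ := hc
      ext w
      constructor
      · intro hw
        have hwA : w ∈ p.A := p.mem_powerset α hα i hi hw
        obtain ⟨l, hl, rfl⟩ := enum_surj hwA
        obtain ⟨k, hk, rfl⟩ := enum_surj hα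
        have := (h3 k i l hk hi hl).mp hw
        rwa [← hA] at this
      · intro hw
        have hwA : w ∈ q.A := q.mem_powerset α (hA ▸ hα) i (h2 ▸ hi) hw
        rw [← hA] at hwA
        obtain ⟨l, hl, rfl⟩ := enum_surj hwA
        obtain ⟨k, hk, rfl⟩ := enum_surj hα
        refine (h3 k i l hk hi hl).mpr ?_
        rwa [← hA]
    · rw [p.default_empty α i hc, q.default_empty α i (by rw [← hA, ← h2]; exact hc)]
  obtain ⟨A1, n1, U1, _, _, _, _, _⟩ := p
  obtain ⟨A2, n2, U2, _, _, _, _, _⟩ := q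
  simp only at hA h2 hU
  subst hA h2 hU
  rfl

lemma uncountable_fiber {α β : Type*} [Countable β] {S : Set α} (hS : ¬S.Countable)
    (f : α → β) : ∃ b, ¬{a | a ∈ S ∧ f a = b}.Countable := by
  by_contra h
  push_neg at h
  apply hS
  have he : S = ⋃ b, {a | a ∈ S ∧ f a = b} := by
    ext a
    simp only [Set.mem_iUnion, Set.mem_setOf_eq]
    exact ⟨fun ha => ⟨f a, ha, rfl⟩, fun ⟨b, ha, _⟩ => ha⟩
  rw [he]
  exact Set.countable_iUnion h

lemma uncountable_diff {α : Type*} {S T : Set α} (hS : ¬S.Countable) (hT : T.Countable) :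
    ¬(S \ T).Countable := fun h =>
  hS (Set.Countable.mono (Set.subset_diff_union S T) (h.union hT))

lemma uncountable_nonempty {α : Type*} {S : Set α} (hS : ¬S.Countable) : S.Nonempty := by
  by_contra h
  rw [Set.not_nonempty_iff_eq_empty] at h
  exact hS (h ▸ Set.countable_empty)

open Cardinal in
lemma ctbl_lt (l : CtblOrd) : (Set.Iio l).Countable := by
  rw [Cardinal.countable_iff_lt_aleph_one]
  have h1 : #(Set.Iio l) ≤ #(Set.Iio l.1) := by
    refine Cardinal.mk_le_of_injective (f := fun x => ⟨x.1.1, x.2⟩) ?_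
    intro a b h
    simp only [Subtype.mk.injEq] at h
    exact Subtype.ext (Subtype.ext (congrArg (fun x : Set.Iio l.1 => (x : Ordinal)) h))
  have h2 := Ordinal.mk_Iio_ordinal l.1
  rw [h2] at h1
  have h3 : Cardinal.lift l.1.card < Cardinal.lift (Cardinal.aleph 1) :=
    Cardinal.lift_lt.mpr (Cardinal.lt_ord.mp l.2)
  rw [Cardinal.lift_aleph] at h3
  simp only [Ordinal.lift_one] at h3
  exact lt_of_le_of_lt h1 h3

lemma exists_gt (A : Finset CtblOrd) : ∃ y : CtblOrd, ∀ x ∈ A, x < y := by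
  classical
  rcases A.eq_empty_or_nonempty with rfl | hA
  · exact ⟨⟨0, omega1_isLimit.pos⟩, by simp⟩
  · obtain ⟨M, hM, hM2⟩ := A.exists_max_image id hA
    refine ⟨⟨M.1 + 1, ?_⟩, ?_⟩
    · have h2 := omega1_isLimit.succ_lt M.2
      rwa [← Ordinal.add_one_eq_succ] at h2
    · intro x hx
      have h : x.1 ≤ M.1 := hM2 x hx
      have h2 : M.1 < M.1 + 1 := by
        have h3 := Order.lt_succ M.1
        rwa [← Ordinal.add_one_eq_succ] at h3
      exact lt_of_le_of_lt h h2

lemma exists_twins (S : Set Cond) (hS : ¬S.Countable) :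
    ∃ p ∈ S, ∃ q ∈ S, p ≠ q ∧ ∃ σ : CtblOrd → CtblOrd,
      p.n = q.n ∧
      (∀ a ∈ p.A, ∀ b ∈ p.A, σ a = σ b → a = b) ∧
      p.A.image σ = q.A ∧
      (∀ δ ∈ p.A, δ ∈ q.A → σ δ = δ) ∧
      (∀ α ∈ p.A, ∀ i < p.n, q.U (σ α) i = (p.U α i).image σ) ∧
      (∀ x ∈ p.A, ∀ y ∈ q.A, y ∉ p.A → x < y) ∧
      (∀ x ∈ p.A, x ∈ q.A → ∀ y ∈ p.A, y ∉ q.A → x < y) := by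
  classical
  obtain ⟨τ, hτ⟩ := uncountable_fiber hS condType
  set S₁ : Set Cond := {a | a ∈ S ∧ condType a = τ} with hS₁def
  -- all members of S₁ have |A| = τ.1
  have hcard : ∀ a ∈ S₁, a.A.card = τ.1 := fun a ha => by rw [← ha.2]; rfl
  set m := τ.1 with hmdef
  -- maximal frequent root
  set P : ℕ → Prop := fun k => ∃ R : Finset CtblOrd, R.card = k ∧
    ¬{a | a ∈ S₁ ∧ R ⊆ a.A}.Countable with hPdef
  have hP0 : P 0 := by
    refine ⟨∅, Finset.card_empty, ?_⟩
    convert hτ using 2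
    ext a
    simp [hS₁def]
  have hPbound : ∀ k, P k → k ≤ m := by
    rintro k ⟨R, hRc, hRu⟩
    obtain ⟨a, ha, hRa⟩ := uncountable_nonempty hRu
    calc k = R.card := hRc.symm
      _ ≤ a.A.card := Finset.card_le_card hRa
      _ = m := hcard a ha
  set k₀ := Nat.findGreatest P m with hk₀def
  have hPk₀ : P k₀ := Nat.findGreatest_spec (Nat.zero_le m) hP0
  obtain ⟨R, hRcard, hRfreq⟩ := hPk₀
  set S₂ : Set Cond := {a | a ∈ S₁ ∧ R ⊆ a.A} with hS₂def
  have claim1 : ∀ ξ : CtblOrd, ξ ∉ R → {a | a ∈ S₂ ∧ ξ ∈ a.A}.Countable := by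
    intro ξ hξ
    by_contra hc
    have hsub : {a | a ∈ S₂ ∧ ξ ∈ a.A} ⊆ {a | a ∈ S₁ ∧ insert ξ R ⊆ a.A} := by
      rintro a ⟨⟨ha1, ha2⟩, ha3⟩
      exact ⟨ha1, Finset.insert_subset ha3 ha2⟩
    have hbig : ¬{a | a ∈ S₁ ∧ insert ξ R ⊆ a.A}.Countable :=
      fun h => hc (h.mono hsub)
    have hPk1 : P (k₀ + 1) := ⟨insert ξ R, by rw [Finset.card_insert_of_notMem hξ, hRcard], hbig⟩
    exact Nat.findGreatest_is_greatest (Nat.lt_succ_self k₀) (hPbound _ hPk1) hPk1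
  have claim2 : ∀ lam : CtblOrd, {a | a ∈ S₂ ∧ ∃ ξ ∈ a.A, ξ ∉ R ∧ ξ < lam}.Countable := by
    intro lam
    have hsub : {a | a ∈ S₂ ∧ ∃ ξ ∈ a.A, ξ ∉ R ∧ ξ < lam} ⊆
        ⋃ ξ ∈ Set.Iio lam, {a | a ∈ S₂ ∧ ξ ∈ a.A ∧ ξ ∉ R} := by
      rintro a ⟨ha, ξ, hξA, hξR, hξlam⟩
      exact Set.mem_biUnion hξlam ⟨ha, hξA, hξR⟩
    refine Set.Countable.mono hsub (Set.Countable.biUnion (ctbl_lt lam) ?_)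
    intro ξ _
    by_cases hξ : ξ ∈ R
    · refine Set.Countable.mono ?_ Set.countable_empty
      rintro a ⟨_, _, h⟩
      exact absurd hξ h
    · exact (claim1 ξ hξ).mono (by rintro a ⟨h1, h2, _⟩; exact ⟨h1, h2⟩)
  obtain ⟨lamR, hlamR⟩ := exists_gt R
  set S₃ : Set Cond := S₂ \ {a | a ∈ S₂ ∧ ∃ ξ ∈ a.A, ξ ∉ R ∧ ξ < lamR} with hS₃def
  have hS₃u : ¬S₃.Countable := uncountable_diff hRfreq (claim2 lamR)
  have hS₃high : ∀ a ∈ S₃, ∀ ξ ∈ a.A, ξ ∉ R → ∀ δ ∈ R, δ < ξ := by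
    rintro a ⟨ha2, ha3⟩ ξ hξA hξR δ hδ
    have : ¬(ξ < lamR) := fun h => ha3 ⟨ha2, ξ, hξA, hξR, h⟩
    exact lt_of_lt_of_le (hlamR δ hδ) (not_lt.mp this)
  obtain ⟨p, hp⟩ := uncountable_nonempty hS₃u
  obtain ⟨lamp, hlamp⟩ := exists_gt p.A
  have hq : ¬(S₃ \ ({a | a ∈ S₂ ∧ ∃ ξ ∈ a.A, ξ ∉ R ∧ ξ < lamp} ∪ {p})).Countable :=
    uncountable_diff hS₃u ((claim2 lamp).union (Set.countable_singleton p))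
  obtain ⟨q, hq3, hqbad⟩ := uncountable_nonempty hq
  rw [Set.mem_union] at hqbad
  push_neg at hqbad
  obtain ⟨hqbad1, hqbad2⟩ := hqbad
  have hqp : q ≠ p := fun h => hqbad2 (Set.mem_singleton_iff.mpr h)
  -- memberships
  have hpS₂ : p ∈ S₂ := hp.1
  have hqS₂ : q ∈ S₂ := hq3.1
  have hpS : p ∈ S := hpS₂.1.1
  have hqS : q ∈ S := hqS₂.1.1
  have hRp : R ⊆ p.A := hpS₂.2
  have hRq : R ⊆ q.A := hqS₂.2
  have htype : condType p = condType q := by rw [hpS₂.1.2, hqS₂.1.2]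
  obtain ⟨hm, hn, SP⟩ := condType_spec htype
  -- separation facts
  have hqhigh : ∀ ξ ∈ q.A, ξ ∉ R → lamp ≤ ξ := by
    intro ξ hξA hξR
    by_contra hc
    exact hqbad1 ⟨hqS₂, ξ, hξA, hξR, not_le.mp hc⟩
  have hsep1 : ∀ x ∈ p.A, ∀ y ∈ q.A, y ∉ p.A → x < y := by
    intro x hx y hy hyp
    have hyR : y ∉ R := fun h => hyp (hRp h)
    exact lt_of_lt_of_le (hlamp x hx) (hqhigh y hy hyR)
  have hPQ : ∀ x, x ∈ p.A → x ∈ q.A → x ∈ R := by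
    intro x hxp hxq
    by_contra hxR
    exact absurd (hlamp x hxp) (not_lt.mpr (hqhigh x hxq hxR))
  have hsep2 : ∀ x ∈ p.A, x ∈ q.A → ∀ y ∈ p.A, y ∉ q.A → x < y := by
    intro x hxp hxq y hyp hyq
    have hyR : y ∉ R := fun h => hyq (hRq h)
    exact hS₃high p hp y hyp hyR x (hPQ x hxp hxq)
  -- the twin map
  set σ : CtblOrd → CtblOrd := fun x => if x ∈ p.A then enum q.A (rankIn p.A x) else x
    with hσdef
  have hσe : ∀ k, k < p.A.card → σ (enum p.A k) = enum q.A k := by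
    intro k hk
    rw [hσdef]
    simp only [enum_mem hk, if_pos, rank_enum hk]
  have hσval : ∀ x ∈ p.A, σ x = enum q.A (rankIn p.A x) := by
    intro x hx
    rw [hσdef]
    simp only [hx, if_pos]
  have hinj : ∀ a ∈ p.A, ∀ b ∈ p.A, σ a = σ b → a = b := by
    intro a ha b hb hab
    rw [hσval a ha, hσval b hb] at hab
    have hra : rankIn p.A a < q.A.card := hm ▸ rank_lt ha
    have hrb : rankIn p.A b < q.A.card := hm ▸ rank_lt hb
    have hr : rankIn p.A a = rankIn p.A b := by
      by_contra hne
      rcases Nat.lt_or_ge (rankIn p.A a) (rankIn p.A b) with h2 | h2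
      · exact absurd (hab ▸ enum_lt h2 hrb) (lt_irrefl _)
      · have h3 : rankIn p.A b < rankIn p.A a := lt_of_le_of_ne h2 (Ne.symm hne)
        exact absurd (hab ▸ enum_lt h3 hra) (lt_irrefl _)
    rw [← enum_rank ha, ← enum_rank hb, hr]
  have him : p.A.image σ = q.A := by
    apply Finset.eq_of_subset_of_card_le
    · intro w hw
      obtain ⟨v, hv, rfl⟩ := Finset.mem_image.mp hw
      rw [hσval v hv]
      exact enum_mem (hm ▸ rank_lt hv)
    · rw [Finset.card_image_of_injOn (fun a ha b hb => hinj a ha b hb), hm]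
  have hfix : ∀ δ ∈ p.A, δ ∈ q.A → σ δ = δ := by
    intro δ hδp hδq
    have hfil : p.A.filter (· < δ) = q.A.filter (· < δ) := by
      ext x
      simp only [Finset.mem_filter]
      constructor
      · rintro ⟨hx, hlt⟩
        refine ⟨?_, hlt⟩
        by_contra hxq
        exact absurd hlt (not_lt.mpr (le_of_lt (hsep2 δ hδp hδq x hx hxq)))
      · rintro ⟨hx, hlt⟩
        refine ⟨?_, hlt⟩
        by_contra hxp
        exact absurd hlt (not_lt.mpr (le_of_lt (hsep1 δ hδp x hx hxp)))
    rw [hσval δ hδp, rankIn, hfil, ← rankIn, enum_rank hδq]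
  have hU : ∀ α ∈ p.A, ∀ i < p.n, q.U (σ α) i = (p.U α i).image σ := by
    intro α hα i hi
    obtain ⟨k, hk, rfl⟩ := enum_surj hα
    rw [hσe k hk]
    ext w
    constructor
    · intro hw
      have hwq : w ∈ q.A := q.mem_powerset (enum q.A k) (enum_mem (hm ▸ hk)) i (hn ▸ hi) hw
      obtain ⟨l, hl, rfl⟩ := enum_surj hwq
      have h2 : enum p.A l ∈ p.U (enum p.A k) i := (SP k i l hk hi (hm ▸ hl)).mpr hw
      rw [Finset.mem_image]
      exact ⟨enum p.A l, h2, hσe l (hm ▸ hl)⟩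
    · intro hw
      obtain ⟨v, hv, rfl⟩ := Finset.mem_image.mp hw
      have hvp : v ∈ p.A := p.mem_powerset (enum p.A k) hα i hi hv
      obtain ⟨l, hl, rfl⟩ := enum_surj hvp
      rw [hσe l hl]
      exact (SP k i l hk hi hl).mp hv
  exact ⟨p, hpS, q, hqS, hqp.symm, σ, hn, hinj, him, hfix, hU, hsep1, hsep2⟩



def Epf (p q : Cond) (x : CtblOrd) (i : ℕ) : Finset CtblOrd :=
  ((p.A ∩ q.A) ×ˢ Finset.range p.n).biUnion fun z =>
    if p.U z.1 z.2 ⊆ p.U x i then p.U z.1 z.2 else ∅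

def Eqf (p q : Cond) (x : CtblOrd) (i : ℕ) : Finset CtblOrd :=
  ((p.A ∩ q.A) ×ˢ Finset.range p.n).biUnion fun z =>
    if q.U z.1 z.2 ⊆ q.U x i then p.U z.1 z.2 else ∅

def rUf (p q : Cond) (σ : CtblOrd → CtblOrd) (x : CtblOrd) (i : ℕ) : Finset CtblOrd :=
  (if x ∈ p.A ∧ i < p.n then p.U x i ∪ (Epf p q x i).image σ else ∅) ∪
  (if x ∈ q.A ∧ i < p.n then q.U x i ∪ Eqf p q x i else ∅)

lemma mem_Epf {p q : Cond} {x : CtblOrd} {i : ℕ} {w : CtblOrd} :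
    w ∈ Epf p q x i ↔
      ∃ z, (z ∈ p.A ∧ z ∈ q.A) ∧ ∃ i₀ < p.n, p.U z i₀ ⊆ p.U x i ∧ w ∈ p.U z i₀ := by
  simp only [Epf, Finset.mem_biUnion, Finset.mem_product, Finset.mem_inter, Finset.mem_range]
  constructor
  · rintro ⟨⟨z, i₀⟩, ⟨hz, hi₀⟩, hw⟩
    by_cases hc : p.U z i₀ ⊆ p.U x i
    · rw [if_pos hc] at hw
      exact ⟨z, hz, i₀, hi₀, hc, hw⟩
    · rw [if_neg hc] at hw
      exact absurd hw (Finset.notMem_empty w)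
  · rintro ⟨z, hz, i₀, hi₀, hsub, hw⟩
    exact ⟨(z, i₀), ⟨hz, hi₀⟩, by simp [hsub, hw]⟩

lemma mem_Eqf {p q : Cond} {x : CtblOrd} {i : ℕ} {w : CtblOrd} :
    w ∈ Eqf p q x i ↔
      ∃ z, (z ∈ p.A ∧ z ∈ q.A) ∧ ∃ i₀ < p.n, q.U z i₀ ⊆ q.U x i ∧ w ∈ p.U z i₀ := by
  simp only [Eqf, Finset.mem_biUnion, Finset.mem_product, Finset.mem_inter, Finset.mem_range]
  constructor
  · rintro ⟨⟨z, i₀⟩, ⟨hz, hi₀⟩, hw⟩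
    by_cases hc : q.U z i₀ ⊆ q.U x i
    · rw [if_pos hc] at hw
      exact ⟨z, hz, i₀, hi₀, hc, hw⟩
    · rw [if_neg hc] at hw
      exact absurd hw (Finset.notMem_empty w)
  · rintro ⟨z, hz, i₀, hi₀, hsub, hw⟩
    exact ⟨(z, i₀), ⟨hz, hi₀⟩, by simp [hsub, hw]⟩

lemma Epf_subset_A (p q : Cond) (x : CtblOrd) (i : ℕ) : Epf p q x i ⊆ p.A := by
  intro w hw
  obtain ⟨z, ⟨hz, _⟩, i₀, hi₀, _, hw⟩ := mem_Epf.mp hw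
  exact p.mem_powerset z hz i₀ hi₀ hw

lemma Eqf_subset_A (p q : Cond) (x : CtblOrd) (i : ℕ) : Eqf p q x i ⊆ p.A := by
  intro w hw
  obtain ⟨z, ⟨hz, _⟩, i₀, hi₀, _, hw⟩ := mem_Eqf.mp hw
  exact p.mem_powerset z hz i₀ hi₀ hw

lemma Epf_subset (p q : Cond) (x : CtblOrd) (i : ℕ) : Epf p q x i ⊆ p.U x i := by
  intro w hw
  obtain ⟨z, _, i₀, _, hs, hw⟩ := mem_Epf.mp hw
  exact hs hw

lemma Epf_mono {p q : Cond} {x y : CtblOrd} {i j : ℕ} (h : p.U x i ⊆ p.U y j) :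
    Epf p q x i ⊆ Epf p q y j := by
  intro w hw
  obtain ⟨z, hz, i₀, hi₀, hs, hw⟩ := mem_Epf.mp hw
  exact mem_Epf.mpr ⟨z, hz, i₀, hi₀, hs.trans h, hw⟩

lemma Eqf_mono {p q : Cond} {x y : CtblOrd} {i j : ℕ} (h : q.U x i ⊆ q.U y j) :
    Eqf p q x i ⊆ Eqf p q y j := by
  intro w hw
  obtain ⟨z, hz, i₀, hi₀, hs, hw⟩ := mem_Eqf.mp hw
  exact mem_Eqf.mpr ⟨z, hz, i₀, hi₀, hs.trans h, hw⟩

lemma mem_rUf {p q : Cond} {σ : CtblOrd → CtblOrd} {x : CtblOrd} {i : ℕ} {w : CtblOrd} :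
    w ∈ rUf p q σ x i ↔
      ((x ∈ p.A ∧ i < p.n) ∧ (w ∈ p.U x i ∨ w ∈ (Epf p q x i).image σ)) ∨
      ((x ∈ q.A ∧ i < p.n) ∧ (w ∈ q.U x i ∨ w ∈ Eqf p q x i)) := by
  unfold rUf
  rw [Finset.mem_union]
  constructor
  · rintro (h | h)
    · by_cases hc : x ∈ p.A ∧ i < p.n
      · rw [if_pos hc, Finset.mem_union] at h; exact Or.inl ⟨hc, h⟩
      · rw [if_neg hc] at h; exact absurd h (Finset.notMem_empty w)
    · by_cases hc : x ∈ q.A ∧ i < p.n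
      · rw [if_pos hc, Finset.mem_union] at h; exact Or.inr ⟨hc, h⟩
      · rw [if_neg hc] at h; exact absurd h (Finset.notMem_empty w)
  · rintro (⟨hc, h⟩ | ⟨hc, h⟩)
    · exact Or.inl (by rw [if_pos hc, Finset.mem_union]; exact h)
    · exact Or.inr (by rw [if_pos hc, Finset.mem_union]; exact h)

lemma amalg (p q : Cond) (hn : p.n = q.n) (σ : CtblOrd → CtblOrd)
    (hinj : ∀ a ∈ p.A, ∀ b ∈ p.A, σ a = σ b → a = b)
    (him : p.A.image σ = q.A)
    (hfix : ∀ δ ∈ p.A, δ ∈ q.A → σ δ = δ)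
    (hU : ∀ α ∈ p.A, ∀ i < p.n, q.U (σ α) i = (p.U α i).image σ)
    (hsep1 : ∀ x ∈ p.A, ∀ y ∈ q.A, y ∉ p.A → x < y)
    (hsep2 : ∀ x ∈ p.A, x ∈ q.A → ∀ y ∈ p.A, y ∉ q.A → x < y) :
    ∃ r : Cond, Cond.le r p ∧ Cond.le r q := by
  classical
  have hσmem : ∀ a ∈ p.A, σ a ∈ q.A := fun a ha => him ▸ Finset.mem_image_of_mem σ ha
  have hsurj : ∀ y ∈ q.A, ∃ a ∈ p.A, σ a = y := by
    intro y hy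
    rw [← him] at hy
    exact Finset.mem_image.mp hy
  have L1 : ∀ a ∈ p.A, σ a ∈ p.A → σ a = a := by
    intro a ha h
    exact hinj (σ a) h a ha (hfix (σ a) h (hσmem a ha))
  have hUroot : ∀ z ∈ p.A, z ∈ q.A → ∀ i < p.n, q.U z i = (p.U z i).image σ := by
    intro z hzp hzq i hi
    have h2 := hU z hzp i hi
    rwa [hfix z hzp hzq] at h2
  have L2 : ∀ w ∈ p.A, w ∈ q.A → ∀ β ∈ p.A, ∀ i < p.n, (w ∈ p.U β i ↔ w ∈ q.U (σ β) i) := by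
    intro w hwp hwq β hβ i hi
    rw [hU β hβ i hi]
    constructor
    · intro h
      rw [Finset.mem_image]; exact ⟨w, h, hfix w hwp hwq⟩
    · intro h
      obtain ⟨ε, hε, hεw⟩ := Finset.mem_image.mp h
      have hεp : ε ∈ p.A := p.mem_powerset β hβ i hi hε
      have h3 : σ ε ∈ p.A := by rw [hεw]; exact hwp
      have h4 : σ ε = ε := L1 ε hεp h3
      rw [← hεw, h4] at *
      exact hε
  have L4 : ∀ α ∈ p.A, ∀ i < p.n, ∀ β ∈ p.A, ∀ j < p.n,
      (p.U α i ⊆ p.U β j ↔ q.U (σ α) i ⊆ q.U (σ β) j) := by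
    intro α hα i hi β hβ j hj
    rw [hU α hα i hi, hU β hβ j hj]
    constructor
    · exact Finset.image_subset_image
    · intro h w hw
      have h2 : σ w ∈ (p.U β j).image σ := h (Finset.mem_image_of_mem σ hw)
      obtain ⟨v, hv, hvw⟩ := Finset.mem_image.mp h2
      have h3 := hinj v (p.mem_powerset β hβ j hj hv) w (p.mem_powerset α hα i hi hw) hvw
      exact h3 ▸ hv
  have EpEq : ∀ x ∈ p.A, x ∈ q.A → ∀ i < p.n, Eqf p q x i = Epf p q x i := by
    intro x hxp hxq i hi
    ext w
    rw [mem_Epf, mem_Eqf]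
    constructor <;> rintro ⟨z, ⟨hz1, hz2⟩, i₀, hi₀, hs, hw⟩ <;>
      refine ⟨z, ⟨hz1, hz2⟩, i₀, hi₀, ?_, hw⟩
    · have h4 := L4 z hz1 i₀ hi₀ x hxp i hi
      rw [hfix z hz1 hz2, hfix x hxp hxq] at h4
      exact h4.mpr hs
    · have h4 := L4 z hz1 i₀ hi₀ x hxp i hi
      rw [hfix z hz1 hz2, hfix x hxp hxq] at h4
      exact h4.mp hs
  have rU_sub_pq : ∀ x i, rUf p q σ x i ⊆ p.A ∪ q.A := by
    intro x i w hw
    rcases mem_rUf.mp hw with ⟨⟨hx, hi⟩, h | h⟩ | ⟨⟨hx, hi⟩, h | h⟩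
    · exact Finset.mem_union_left _ (p.mem_powerset x hx i hi h)
    · obtain ⟨v, hv, rfl⟩ := Finset.mem_image.mp h
      exact Finset.mem_union_right _ (hσmem v (Epf_subset_A p q x i hv))
    · exact Finset.mem_union_right _ (q.mem_powerset x hx i (hn ▸ hi) h)
    · exact Finset.mem_union_left _ (Eqf_subset_A p q x i h)
  have rU_inter_p : ∀ x ∈ p.A, ∀ i < p.n, rUf p q σ x i ∩ p.A = p.U x i := by
    intro x hx i hi
    ext w
    rw [Finset.mem_inter]
    constructor
    · rintro ⟨hw, hwp⟩
      rcases mem_rUf.mp hw with ⟨_, h | h⟩ | ⟨⟨hxq, _⟩, h | h⟩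
      · exact h
      · obtain ⟨v, hv, rfl⟩ := Finset.mem_image.mp h
        have hvA : v ∈ p.A := Epf_subset_A p q x i hv
        have h2 := L1 v hvA hwp
        rw [h2]
        exact Epf_subset p q x i hv
      · have hwq : w ∈ q.A := q.mem_powerset x hxq i (hn ▸ hi) h
        have h2 := L2 w hwp hwq x hx i hi
        rw [hfix x hx hxq] at h2
        exact h2.mpr h
      · rw [EpEq x hx hxq i hi] at h
        exact Epf_subset p q x i h
    · intro hw
      exact ⟨mem_rUf.mpr (Or.inl ⟨⟨hx, hi⟩, Or.inl hw⟩), p.mem_powerset x hx i hi hw⟩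
  have rU_inter_q : ∀ x ∈ q.A, ∀ i < p.n, rUf p q σ x i ∩ q.A = q.U x i := by
    intro x hxq i hi
    ext w
    rw [Finset.mem_inter]
    constructor
    · rintro ⟨hw, hwq⟩
      rcases mem_rUf.mp hw with ⟨⟨hxp, _⟩, h | h⟩ | ⟨_, h | h⟩
      · have hwp : w ∈ p.A := p.mem_powerset x hxp i hi h
        have h2 := L2 w hwp hwq x hxp i hi
        rw [hfix x hxp hxq] at h2
        exact h2.mp h
      · obtain ⟨v, hv, rfl⟩ := Finset.mem_image.mp h
        have h2 : σ v ∈ (p.U x i).image σ :=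
          Finset.mem_image_of_mem σ (Epf_subset p q x i hv)
        rwa [← hUroot x hxp hxq i hi] at h2
      · exact h
      · obtain ⟨z, ⟨hz1, hz2⟩, i₀, hi₀, hs, hw2⟩ := mem_Eqf.mp h
        have hwp : w ∈ p.A := p.mem_powerset z hz1 i₀ hi₀ hw2
        have h2 := L2 w hwp hwq z hz1 i₀ hi₀
        rw [hfix z hz1 hz2] at h2
        exact hs (h2.mp hw2)
    · intro hw
      exact ⟨mem_rUf.mpr (Or.inr ⟨⟨hxq, hi⟩, Or.inl hw⟩), q.mem_powerset x hxq i (hn ▸ hi) hw⟩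
  have mem_q_side : ∀ x ∈ p.A, ∀ i < p.n, ∀ w ∈ rUf p q σ x i, w ∉ p.A →
      ∃ v ∈ p.U x i, σ v = w := by
    intro x hxp i hi w hw hwp
    rcases mem_rUf.mp hw with ⟨_, h | h⟩ | ⟨⟨hxq, _⟩, h | h⟩
    · exact absurd (p.mem_powerset x hxp i hi h) hwp
    · obtain ⟨v, hv, hvw⟩ := Finset.mem_image.mp h
      exact ⟨v, Epf_subset p q x i hv, hvw⟩
    · rw [hUroot x hxp hxq i hi] at h
      obtain ⟨v, hv, hvw⟩ := Finset.mem_image.mp h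
      exact ⟨v, hv, hvw⟩
    · exact absurd (Eqf_subset_A p q x i h) hwp
  have mem_p_side : ∀ x ∈ q.A, ∀ i < p.n, ∀ w ∈ rUf p q σ x i, w ∉ q.A → σ w ∈ q.U x i := by
    intro x hxq i hi w hw hwq
    rcases mem_rUf.mp hw with ⟨⟨hxp, _⟩, h | h⟩ | ⟨_, h | h⟩
    · have h2 : σ w ∈ (p.U x i).image σ := Finset.mem_image_of_mem σ h
      rwa [← hUroot x hxp hxq i hi] at h2
    · obtain ⟨v, hv, hvw⟩ := Finset.mem_image.mp h
      exact absurd (hvw ▸ hσmem v (Epf_subset_A p q x i hv)) hwq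
    · exact absurd (q.mem_powerset x hxq i (hn ▸ hi) h) hwq
    · obtain ⟨z, ⟨hz1, hz2⟩, i₀, hi₀, hs, hw2⟩ := mem_Eqf.mp h
      have h2 : σ w ∈ (p.U z i₀).image σ := Finset.mem_image_of_mem σ hw2
      rw [← hUroot z hz1 hz2 i₀ hi₀] at h2
      exact hs h2
  have contra : ∀ x ∈ p.A, ∀ i < p.n, ∀ δ ∈ p.A, δ ∉ q.A → δ ∈ Epf p q x i →
      rUf p q σ x i ⊆ rUf p q σ (σ δ) 0 → False := by
    intro x hxp i hi δ hδp hδq hδE hsub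
    have h0 : 0 < p.n := lt_of_le_of_lt (Nat.zero_le i) hi
    have hσδq : σ δ ∈ q.A := hσmem δ hδp
    have hσδp : σ δ ∉ p.A := by
      intro h
      have h2 := L1 δ hδp h
      rw [h2] at hσδq
      exact hδq hσδq
    have hkey : p.U x i ⊆ p.U δ 0 := by
      intro v hv
      have hvp : v ∈ p.A := p.mem_powerset x hxp i hi hv
      have hv2 : v ∈ rUf p q σ (σ δ) 0 := hsub (mem_rUf.mpr (Or.inl ⟨⟨hxp, hi⟩, Or.inl hv⟩))
      rcases mem_rUf.mp hv2 with ⟨⟨h1, _⟩, _⟩ | ⟨_, h | h⟩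
      · exact absurd h1 hσδp
      · have hvq : v ∈ q.A := q.mem_powerset (σ δ) hσδq 0 (hn ▸ h0) h
        exact (L2 v hvp hvq δ hδp 0 h0).mpr h
      · obtain ⟨z, ⟨hz1, hz2⟩, i₁, hi₁, hs, hv3⟩ := mem_Eqf.mp h
        have h4 := L4 z hz1 i₁ hi₁ δ hδp 0 h0
        rw [hfix z hz1 hz2] at h4
        exact h4.mpr hs hv3
    obtain ⟨z, ⟨hz1, hz2⟩, i₀, hi₀, hs, hδ2⟩ := mem_Epf.mp hδE
    have h5 : δ ≤ z := p.P3 z hz1 δ hδp i₀ hi₀ hδ2 (hs.trans hkey)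
    exact absurd h5 (not_le.mpr (hsep2 z hz1 hz2 δ hδp hδq))
  refine ⟨⟨p.A ∪ q.A, p.n, rUf p q σ, ?_, ?_, ?_, ?_, ?_⟩, ?_, ?_⟩
  · -- default_empty
    intro α i h
    have h1 : ¬(α ∈ p.A ∧ i < p.n) := fun ⟨ha, hi⟩ => h ⟨Finset.mem_union_left _ ha, hi⟩
    have h2 : ¬(α ∈ q.A ∧ i < p.n) := fun ⟨ha, hi⟩ => h ⟨Finset.mem_union_right _ ha, hi⟩
    simp [rUf, h1, h2]
  · -- mem_powerset
    intro α _ i _ w hw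
    exact rU_sub_pq α i hw
  · -- P2_self
    intro α hα i hi
    rcases Finset.mem_union.mp hα with h | h
    · exact mem_rUf.mpr (Or.inl ⟨⟨h, hi⟩, Or.inl (p.P2_self α h i hi)⟩)
    · exact mem_rUf.mpr (Or.inr ⟨⟨h, hi⟩, Or.inl (q.P2_self α h i (hn ▸ hi))⟩)
  · -- P2_mono
    intro α _ i h1 hi w hw
    have hi' : i - 1 < p.n := lt_of_le_of_lt (Nat.sub_le i 1) hi
    rcases mem_rUf.mp hw with ⟨⟨hx, _⟩, h | h⟩ | ⟨⟨hx, _⟩, h | h⟩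
    · exact mem_rUf.mpr (Or.inl ⟨⟨hx, hi'⟩, Or.inl (p.P2_mono α hx i h1 hi h)⟩)
    · exact mem_rUf.mpr (Or.inl ⟨⟨hx, hi'⟩,
        Or.inr (Finset.image_subset_image (Epf_mono (p.P2_mono α hx i h1 hi)) h)⟩)
    · exact mem_rUf.mpr (Or.inr ⟨⟨hx, hi'⟩, Or.inl (q.P2_mono α hx i h1 (hn ▸ hi) h)⟩)
    · exact mem_rUf.mpr (Or.inr ⟨⟨hx, hi'⟩, Or.inr (Eqf_mono (q.P2_mono α hx i h1 (hn ▸ hi)) h)⟩)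
  · -- P3
    intro x hx y hy i hi hyU hsub
    by_cases hyp : y ∈ p.A
    · by_cases hxp : x ∈ p.A
      · have h0 : 0 < p.n := lt_of_le_of_lt (Nat.zero_le i) hi
        have e1 : y ∈ p.U x i := by
          rw [← rU_inter_p x hxp i hi]; exact Finset.mem_inter.mpr ⟨hyU, hyp⟩
        have e2 : p.U x i ⊆ p.U y 0 := by
          intro v hv
          have hvp : v ∈ p.A := p.mem_powerset x hxp i hi hv
          have hv2 : v ∈ rUf p q σ y 0 := hsub (mem_rUf.mpr (Or.inl ⟨⟨hxp, hi⟩, Or.inl hv⟩))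
          rw [← rU_inter_p y hyp 0 h0]
          exact Finset.mem_inter.mpr ⟨hv2, hvp⟩
        exact p.P3 x hxp y hyp i hi e1 e2
      · have hxq : x ∈ q.A := (Finset.mem_union.mp hx).resolve_left hxp
        exact le_of_lt (hsep1 y hyp x hxq hxp)
    · have hyq : y ∈ q.A := (Finset.mem_union.mp hy).resolve_left hyp
      obtain ⟨δ, hδp, hσδ⟩ := hsurj y hyq
      have hδq : δ ∉ q.A := by
        intro h
        exact hyp (by rw [← hσδ, hfix δ hδp h]; exact hδp)
      have h0 : 0 < p.n := lt_of_le_of_lt (Nat.zero_le i) hi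
      have himg : x ∈ p.A → y ∈ (Epf p q x i).image σ → False := by
        intro hxp h
        obtain ⟨v, hv, hvy⟩ := Finset.mem_image.mp h
        have hvp : v ∈ p.A := Epf_subset_A p q x i hv
        have hvδ : v = δ := hinj v hvp δ hδp (hvy.trans hσδ.symm)
        rw [hvδ] at hv
        exact contra x hxp i hi δ hδp hδq hv (by rw [hσδ]; exact hsub)
      by_cases hxq : x ∈ q.A
      · by_cases hyqU : y ∈ q.U x i
        · have e2 : q.U x i ⊆ q.U y 0 := by
            intro v hv
            have hvq : v ∈ q.A := q.mem_powerset x hxq i (hn ▸ hi) hv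
            have hv2 : v ∈ rUf p q σ y 0 := hsub (mem_rUf.mpr (Or.inr ⟨⟨hxq, hi⟩, Or.inl hv⟩))
            rw [← rU_inter_q y hyq 0 h0]
            exact Finset.mem_inter.mpr ⟨hv2, hvq⟩
          exact q.P3 x hxq y hyq i (hn ▸ hi) hyqU e2
        · rcases mem_rUf.mp hyU with ⟨⟨hxp, _⟩, h | h⟩ | ⟨_, h | h⟩
          · exact absurd (p.mem_powerset x hxp i hi h) hyp
          · exact (himg hxp h).elim
          · exact absurd h hyqU
          · exact absurd (Eqf_subset_A p q x i h) hyp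
      · have hxp : x ∈ p.A := (Finset.mem_union.mp hx).resolve_right hxq
        rcases mem_rUf.mp hyU with ⟨_, h | h⟩ | ⟨hc, _⟩
        · exact absurd (p.mem_powerset x hxp i hi h) hyp
        · exact (himg hxp h).elim
        · exact absurd hc.1 hxq
  · -- r ≤ p
    refine ⟨Finset.subset_union_left, le_refl _, ?_, ?_, ?_⟩
    · intro α hα i hi
      exact (rU_inter_p α hα i hi).symm
    · intro α hα i hi β hβ j hj hdis
      rw [Finset.eq_empty_iff_forall_notMem]
      intro w hw
      obtain ⟨hw1, hw2⟩ := Finset.mem_inter.mp hw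
      have hdis' : ∀ v, v ∈ p.U α i → v ∈ p.U β j → False := by
        intro v h1 h2
        have : v ∈ p.U α i ∩ p.U β j := Finset.mem_inter.mpr ⟨h1, h2⟩
        rw [hdis] at this
        exact Finset.notMem_empty v this
      by_cases hwp : w ∈ p.A
      · have e1 : w ∈ p.U α i := by
          rw [← rU_inter_p α hα i hi]; exact Finset.mem_inter.mpr ⟨hw1, hwp⟩
        have e2 : w ∈ p.U β j := by
          rw [← rU_inter_p β hβ j hj]; exact Finset.mem_inter.mpr ⟨hw2, hwp⟩
        exact hdis' w e1 e2
      · obtain ⟨v1, hv1, hv1w⟩ := mem_q_side α hα i hi w hw1 hwp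
        obtain ⟨v2, hv2, hv2w⟩ := mem_q_side β hβ j hj w hw2 hwp
        have : v1 = v2 := hinj v1 (p.mem_powerset α hα i hi hv1) v2
          (p.mem_powerset β hβ j hj hv2) (hv1w.trans hv2w.symm)
        exact hdis' v1 hv1 (this ▸ hv2)
    · intro α hα i hi β hβ j hj hsub w hw
      rcases mem_rUf.mp hw with ⟨⟨hx, hi'⟩, h | h⟩ | ⟨⟨hxq, hi'⟩, h | h⟩
      · exact mem_rUf.mpr (Or.inl ⟨⟨hβ, hj⟩, Or.inl (hsub h)⟩)
      · exact mem_rUf.mpr (Or.inl ⟨⟨hβ, hj⟩,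
          Or.inr (Finset.image_subset_image (Epf_mono hsub) h)⟩)
      · rw [hUroot α hα hxq i hi] at h
        have hsubE : p.U α i ⊆ Epf p q β j := fun v hv =>
          mem_Epf.mpr ⟨α, ⟨hα, hxq⟩, i, hi, hsub, hv⟩
        exact mem_rUf.mpr (Or.inl ⟨⟨hβ, hj⟩,
          Or.inr (Finset.image_subset_image hsubE h)⟩)
      · rw [EpEq α hα hxq i hi] at h
        exact mem_rUf.mpr (Or.inl ⟨⟨hβ, hj⟩, Or.inl (hsub (Epf_subset p q α i h))⟩)
  · -- r ≤ q
    refine ⟨Finset.subset_union_right, le_of_eq hn.symm, ?_, ?_, ?_⟩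
    · intro α hα i hi
      exact (rU_inter_q α hα i (hn ▸ hi)).symm
    · intro α hα i hi β hβ j hj hdis
      have hi' : i < p.n := hn ▸ hi
      have hj' : j < p.n := hn ▸ hj
      rw [Finset.eq_empty_iff_forall_notMem]
      intro w hw
      obtain ⟨hw1, hw2⟩ := Finset.mem_inter.mp hw
      have hdis' : ∀ v, v ∈ q.U α i → v ∈ q.U β j → False := by
        intro v h1 h2
        have : v ∈ q.U α i ∩ q.U β j := Finset.mem_inter.mpr ⟨h1, h2⟩
        rw [hdis] at this
        exact Finset.notMem_empty v this
      by_cases hwq : w ∈ q.A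
      · have e1 : w ∈ q.U α i := by
          rw [← rU_inter_q α hα i hi']; exact Finset.mem_inter.mpr ⟨hw1, hwq⟩
        have e2 : w ∈ q.U β j := by
          rw [← rU_inter_q β hβ j hj']; exact Finset.mem_inter.mpr ⟨hw2, hwq⟩
        exact hdis' w e1 e2
      · exact hdis' (σ w) (mem_p_side α hα i hi' w hw1 hwq) (mem_p_side β hβ j hj' w hw2 hwq)
    · intro α hα i hi β hβ j hj hsub w hw
      have hi' : i < p.n := hn ▸ hi
      have hj' : j < p.n := hn ▸ hj
      rcases mem_rUf.mp hw with ⟨⟨hαp, _⟩, h | h⟩ | ⟨_, h | h⟩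
      · have : w ∈ Eqf p q β j := mem_Eqf.mpr ⟨α, ⟨hαp, hα⟩, i, hi', hsub, h⟩
        exact mem_rUf.mpr (Or.inr ⟨⟨hβ, hj'⟩, Or.inr this⟩)
      · have h2 : w ∈ (p.U α i).image σ :=
          Finset.image_subset_image (Epf_subset p q α i) h
        rw [← hUroot α hαp hα i hi'] at h2
        exact mem_rUf.mpr (Or.inr ⟨⟨hβ, hj'⟩, Or.inl (hsub h2)⟩)
      · exact mem_rUf.mpr (Or.inr ⟨⟨hβ, hj'⟩, Or.inl (hsub h)⟩)
      · exact mem_rUf.mpr (Or.inr ⟨⟨hβ, hj'⟩, Or.inr (Eqf_mono hsub h)⟩)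

/-- The poset `P` of conditions satisfies the countable chain condition: any uncountable
set of conditions contains two distinct compatible elements; equivalently, every
antichain (set of pairwise incompatible conditions) is countable. -/
theorem cond_ccc :
    (∀ S : Set Cond, ¬ S.Countable →
      ∃ p ∈ S, ∃ q ∈ S, p ≠ q ∧ ∃ r : Cond, Cond.le r p ∧ Cond.le r q) ∧
    (∀ T : Set Cond,
      (∀ p ∈ T, ∀ q ∈ T, p ≠ q → ¬ ∃ r : Cond, Cond.le r p ∧ Cond.le r q) →
      T.Countable) := by
  constructor
  · intro S hS
    obtain ⟨p, hpS, q, hqS, hpq, σ, hn, hinj, him, hfix, hU, hsep1, hsep2⟩ :=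
      exists_twins S hS
    obtain ⟨r, h1, h2⟩ := amalg p q hn σ hinj him hfix hU hsep1 hsep2
    exact ⟨p, hpS, q, hqS, hpq, r, h1, h2⟩
  · intro T hT
    by_contra hc
    obtain ⟨p, hpS, q, hqS, hpq, σ, hn, hinj, him, hfix, hU, hsep1, hsep2⟩ :=
      exists_twins T hc
    obtain ⟨r, h1, h2⟩ := amalg p q hn σ hinj him hfix hU hsep1 hsep2
    exact hT p hpS q hqS hpq ⟨r, h1, h2⟩
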